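/- Let n ≥ 1, let L_1, …, L_n be nonzero real numbers, let X_1, …, X_{2n} be the anisotropic Heisenberg vector fields on ℝ^{2n+1}, and let w_1, …, w_{2n} be the weights w_j = 1/(2|L_j|) for 1 ≤ j ≤ n and w_j = 1/(2|L_{j−n}|) for n+1 ≤ j ≤ 2n. Define ρ(x_1,…,x_{2n},t) = ( (Σ_{j=1}^{n} 2|L_j| x_j² + Σ_{j=n+1}^{2n} 2|L_{j−n}| x_j²)² + 16 t² )^{1/4}. Then ρ satisfies the weighted infinite Laplace equation Δ_∞ ρ = Σ_{i=1}^{2n} Σ_{j=1}^{2n} w_i w_j X_i(X_j ρ) · X_i ρ · X_j ρ = 0 at every point of ℝ^{2n+1} \ {0}. -/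

import Mathlib

/-- Partial derivative of `f : ℝ^m → ℝ` in the `i`-th coordinate direction. -/
noncomputable def pderiv' {m : ℕ} (i : Fin m) (f : (Fin m → ℝ) → ℝ) (q : Fin m → ℝ) : ℝ :=
  fderiv ℝ f q (Pi.single i 1)

/-- The anisotropic Heisenberg vector fields on ℝ^{2n+1}. -/
noncomputable def X (n : ℕ) (L : Fin n → ℝ) (j : Fin (2*n))
    (f : (Fin (2*n+1) → ℝ) → ℝ) (q : Fin (2*n+1) → ℝ) : ℝ :=
  pderiv' ⟨(j : ℕ), by have := j.isLt; omega⟩ f q +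
    (if h : (j : ℕ) < n then
        -(L ⟨(j : ℕ), h⟩) * q ⟨(j : ℕ) + n, by have := j.isLt; omega⟩
      else
        (L ⟨(j : ℕ) - n, by have := j.isLt; omega⟩) * q ⟨(j : ℕ) - n, by have := j.isLt; omega⟩) *
      pderiv' ⟨2*n, by omega⟩ f q

/-- The weights `w_j = 1/(2|L_j|)` for `1 ≤ j ≤ n` and `w_j = 1/(2|L_{j−n}|)` for
`n+1 ≤ j ≤ 2n`. -/
noncomputable def wgt (n : ℕ) (L : Fin n → ℝ) (j : Fin (2*n)) : ℝ :=
  if h : (j : ℕ) < n then 1 / (2 * |L ⟨(j : ℕ), h⟩|)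
  else 1 / (2 * |L ⟨(j : ℕ) - n, by have := j.isLt; omega⟩|)

/-- `M(f) = (Σ_{j=1}^{2n} w_j (X_j f)²)^{1/2}`. -/
noncomputable def Mfun (n : ℕ) (L : Fin n → ℝ) (f : (Fin (2*n+1) → ℝ) → ℝ)
    (q : Fin (2*n+1) → ℝ) : ℝ :=
  Real.sqrt (∑ j : Fin (2*n), wgt n L j * (X n L j f q)^2)

/-- The gauge `ρ = ((Σ_{j=1}^{n} 2|L_j| x_j² + Σ_{j=n+1}^{2n} 2|L_{j−n}| x_j²)² + 16 t²)^{1/4}`. -/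
noncomputable def rho (n : ℕ) (L : Fin n → ℝ) (q : Fin (2*n+1) → ℝ) : ℝ :=
  ((∑ j : Fin (2*n),
      (if h : (j : ℕ) < n then 2 * |L ⟨(j : ℕ), h⟩|
       else 2 * |L ⟨(j : ℕ) - n, by have := j.isLt; omega⟩|) *
        (q ⟨(j : ℕ), by have := j.isLt; omega⟩)^2)^2
    + 16 * (q ⟨2*n, by omega⟩)^2) ^ ((1:ℝ)/4)

noncomputable section RhoAux
open Finset

variable (n : ℕ) (L : Fin n → ℝ)

def iot (j : Fin (2*n)) : Fin (2*n+1) := ⟨(j:ℕ), by have := j.isLt; omega⟩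
def tauF : Fin (2*n+1) := ⟨2*n, by omega⟩
def loF (k : Fin n) : Fin (2*n) := ⟨(k:ℕ), by have := k.isLt; omega⟩
def hiF (k : Fin n) : Fin (2*n) := ⟨n + (k:ℕ), by have := k.isLt; omega⟩
def lam (j : Fin (2*n)) : ℝ :=
  if h : (j:ℕ) < n then L ⟨(j:ℕ), h⟩ else L ⟨(j:ℕ) - n, by have := j.isLt; omega⟩
def epsF (j : Fin (2*n)) : ℝ := if (j:ℕ) < n then -1 else 1
def prm (j : Fin (2*n)) : Fin (2*n) :=
  if h : (j:ℕ) < n then ⟨(j:ℕ) + n, by omega⟩ else ⟨(j:ℕ) - n, by have := j.isLt; omega⟩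
def cF (j : Fin (2*n)) : ℝ := 2 * |lam n L j|
def sF (q : Fin (2*n+1) → ℝ) : ℝ := ∑ j : Fin (2*n), cF n L j * (q (iot n j))^2
def AF (q : Fin (2*n+1) → ℝ) : ℝ := (sF n L q)^2 + 16 * (q (tauF n))^2
def elF (j : Fin (2*n)) (q : Fin (2*n+1) → ℝ) : ℝ :=
  epsF n j * lam n L j * q (iot n (prm n j))
def GF (j : Fin (2*n)) (q : Fin (2*n+1) → ℝ) : ℝ :=
  4 * cF n L j * sF n L q * q (iot n j) + 32 * elF n L j q * q (tauF n)

@[simp] lemma lam_lo (k : Fin n) : lam n L (loF n k) = L k := by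
  simp [lam, loF, k.isLt]
@[simp] lemma lam_hi (k : Fin n) : lam n L (hiF n k) = L k := by
  have h : ¬ (n + (k:ℕ) < n) := by omega
  simp [lam, hiF, h]
@[simp] lemma eps_lo (k : Fin n) : epsF n (loF n k) = -1 := by simp [epsF, loF, k.isLt]
@[simp] lemma eps_hi (k : Fin n) : epsF n (hiF n k) = 1 := by
  have h : ¬ (n + (k:ℕ) < n) := by omega
  simp [epsF, hiF, h]
@[simp] lemma prm_lo (k : Fin n) : prm n (loF n k) = hiF n k := by
  unfold prm loF hiF
  rw [dif_pos k.isLt]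
  exact Fin.ext (by simp [Nat.add_comm])
@[simp] lemma prm_hi (k : Fin n) : prm n (hiF n k) = loF n k := by
  unfold prm loF hiF
  rw [dif_neg (show ¬ ((n + (k:ℕ)) < n) by omega)]
  exact Fin.ext (by simp)
lemma lam_ne (hL : ∀ j, L j ≠ 0) (j : Fin (2*n)) : lam n L j ≠ 0 := by
  unfold lam; split <;> exact hL _
@[simp] lemma cF_lo (k : Fin n) : cF n L (loF n k) = 2 * |L k| := by simp [cF]
@[simp] lemma cF_hi (k : Fin n) : cF n L (hiF n k) = 2 * |L k| := by simp [cF]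
lemma wgt_eq (j : Fin (2*n)) : wgt n L j = 1 / (2 * |lam n L j|) := by
  by_cases h : (j:ℕ) < n <;> simp [wgt, lam, h]
@[simp] lemma wgt_lo (k : Fin n) : wgt n L (loF n k) = 1 / (2 * |L k|) := by
  rw [wgt_eq]; simp
@[simp] lemma wgt_hi (k : Fin n) : wgt n L (hiF n k) = 1 / (2 * |L k|) := by
  rw [wgt_eq]; simp
@[simp] lemma elF_lo (k : Fin n) (q : Fin (2*n+1) → ℝ) :
    elF n L (loF n k) q = -(L k) * q (iot n (hiF n k)) := by
  simp [elF]
@[simp] lemma elF_hi (k : Fin n) (q : Fin (2*n+1) → ℝ) :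
    elF n L (hiF n k) q = L k * q (iot n (loF n k)) := by
  simp [elF]

lemma sum_split (f : Fin (2*n) → ℝ) :
    ∑ i, f i = ∑ k : Fin n, (f (loF n k) + f (hiF n k)) := by
  rw [Finset.sum_add_distrib]
  have h2 : 2*n = n+n := two_mul n
  rw [show (∑ i : Fin (2*n), f i) = ∑ i : Fin (n+n), f (Fin.cast h2.symm i) from
    Fintype.sum_equiv (finCongr h2) f (fun i => f (Fin.cast h2.symm i))
      (fun x => congrArg f (Fin.ext rfl))]
  rw [Fin.sum_univ_add]
  congr 1

@[simp] lemma single_iot_iot (i j : Fin (2*n)) :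
    (Pi.single (iot n i) (1:ℝ) : Fin (2*n+1) → ℝ) (iot n j) = if j = i then 1 else 0 := by
  rw [Pi.single_apply]
  congr 1
  simp [iot, Fin.mk.injEq, Fin.val_inj]
@[simp] lemma single_iot_tau (j : Fin (2*n)) :
    (Pi.single (iot n j) (1:ℝ) : Fin (2*n+1) → ℝ) (tauF n) = 0 := by
  rw [Pi.single_apply, if_neg]
  intro h
  have := j.isLt
  simp [iot, tauF, Fin.mk.injEq] at h
  omega
@[simp] lemma single_tau_iot (j : Fin (2*n)) :
    (Pi.single (tauF n) (1:ℝ) : Fin (2*n+1) → ℝ) (iot n j) = 0 := by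
  rw [Pi.single_apply, if_neg]
  intro h
  have := j.isLt
  simp [iot, tauF, Fin.mk.injEq] at h
  omega
@[simp] lemma single_tau_tau : (Pi.single (tauF n) (1:ℝ) : Fin (2*n+1) → ℝ) (tauF n) = 1 := Pi.single_eq_same _ _

def DS (q : Fin (2*n+1) → ℝ) : (Fin (2*n+1) → ℝ) →L[ℝ] ℝ :=
  ∑ j : Fin (2*n), (2 * cF n L j * q (iot n j)) • ContinuousLinearMap.proj (iot n j)

lemma DS_apply (q v : Fin (2*n+1) → ℝ) :
    DS n L q v = ∑ j : Fin (2*n), 2 * cF n L j * q (iot n j) * v (iot n j) := by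
  simp [DS]

lemma hasFDerivAt_sF (q : Fin (2*n+1) → ℝ) : HasFDerivAt (sF n L) (DS n L q) q := by
  unfold sF DS
  apply HasFDerivAt.fun_sum
  intro j _
  have hp := (ContinuousLinearMap.proj (R := ℝ) (φ := fun _ : Fin (2*n+1) => ℝ)
    (iot n j)).hasFDerivAt (x := q)
  have heq : (fun q : Fin (2*n+1) → ℝ => cF n L j * (q (iot n j))^2)
      = fun y => cF n L j * (y (iot n j) * y (iot n j)) := by
    funext y; ring
  rw [heq]
  refine HasFDerivAt.congr_fderiv ((hp.mul hp).const_mul (cF n L j)) ?_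
  refine ContinuousLinearMap.ext fun v => ?_
  simp [smul_eq_mul]
  ring

def DA (q : Fin (2*n+1) → ℝ) : (Fin (2*n+1) → ℝ) →L[ℝ] ℝ :=
  (2 * sF n L q) • DS n L q + (32 * q (tauF n)) • ContinuousLinearMap.proj (tauF n)

lemma hasFDerivAt_AF (q : Fin (2*n+1) → ℝ) : HasFDerivAt (AF n L) (DA n L q) q := by
  unfold AF DA
  have hs := hasFDerivAt_sF n L q
  have ht := (ContinuousLinearMap.proj (R := ℝ) (φ := fun _ : Fin (2*n+1) => ℝ)
    (tauF n)).hasFDerivAt (x := q)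
  have h1 : HasFDerivAt (fun q => (sF n L q)^2) ((2 * sF n L q) • DS n L q) q := by
    have heq : (fun q : Fin (2*n+1) → ℝ => (sF n L q)^2) = fun y => sF n L y * sF n L y := by
      funext y; ring
    rw [heq]
    refine HasFDerivAt.congr_fderiv (hs.mul hs) ?_
    refine ContinuousLinearMap.ext fun v => ?_
    simp [smul_eq_mul]; ring
  have h2 : HasFDerivAt (fun q : Fin (2*n+1) → ℝ => 16 * (q (tauF n))^2)
      ((32 * q (tauF n)) • ContinuousLinearMap.proj (R := ℝ)
        (φ := fun _ : Fin (2*n+1) => ℝ) (tauF n)) q := by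
    have heq : (fun q : Fin (2*n+1) → ℝ => 16 * (q (tauF n))^2)
        = fun y => 16 * (y (tauF n) * y (tauF n)) := by
      funext y; ring
    rw [heq]
    refine HasFDerivAt.congr_fderiv ((ht.mul ht).const_mul (16:ℝ)) ?_
    refine ContinuousLinearMap.ext fun v => ?_
    simp [smul_eq_mul]; ring
  exact h1.add h2

lemma DS_single (q : Fin (2*n+1) → ℝ) (i : Fin (2*n)) :
    DS n L q (Pi.single (iot n i) 1) = 2 * cF n L i * q (iot n i) := by
  rw [DS_apply]
  simp only [single_iot_iot, mul_ite, mul_one, mul_zero]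
  rw [Finset.sum_ite_eq']
  simp

lemma DS_tau (q : Fin (2*n+1) → ℝ) :
    DS n L q (Pi.single (tauF n) 1) = 0 := by
  rw [DS_apply]
  simp

lemma DA_single (q : Fin (2*n+1) → ℝ) (i : Fin (2*n)) :
    DA n L q (Pi.single (iot n i) 1) = 4 * sF n L q * cF n L i * q (iot n i) := by
  simp [DA, DS_single]
  ring

lemma DA_tau (q : Fin (2*n+1) → ℝ) :
    DA n L q (Pi.single (tauF n) 1) = 32 * q (tauF n) := by
  simp [DA, DS_tau]

lemma rho_eq : rho n L = fun q => (AF n L q) ^ ((1:ℝ)/4) := by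
  funext q
  have hsum : (∑ j : Fin (2*n),
      (if h : (j : ℕ) < n then 2 * |L ⟨(j : ℕ), h⟩|
       else 2 * |L ⟨(j : ℕ) - n, by have := j.isLt; omega⟩|) *
        (q ⟨(j : ℕ), by have := j.isLt; omega⟩)^2) = sF n L q := by
    apply Finset.sum_congr rfl
    intro j _
    congr 1
    unfold cF lam
    split <;> rfl
  unfold rho
  rw [hsum]
  rfl

lemma X_eq (j : Fin (2*n)) (f : (Fin (2*n+1) → ℝ) → ℝ) (q : Fin (2*n+1) → ℝ) :
    X n L j f q = pderiv' (iot n j) f q + elF n L j q * pderiv' (tauF n) f q := by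
  unfold X elF epsF lam prm iot tauF
  by_cases h : (j:ℕ) < n
  · rw [dif_pos h, dif_pos h, if_pos h, dif_pos h]
    ring
  · rw [dif_neg h, dif_neg h, if_neg h, dif_neg h]
    ring

def DG (j : Fin (2*n)) (q : Fin (2*n+1) → ℝ) : (Fin (2*n+1) → ℝ) →L[ℝ] ℝ :=
  (4 * cF n L j * q (iot n j)) • DS n L q
  + (4 * cF n L j * sF n L q) • ContinuousLinearMap.proj (iot n j)
  + (32 * epsF n j * lam n L j * q (tauF n)) • ContinuousLinearMap.proj (iot n (prm n j))
  + (32 * elF n L j q) • ContinuousLinearMap.proj (tauF n)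

lemma hasFDerivAt_GF (j : Fin (2*n)) (q : Fin (2*n+1) → ℝ) :
    HasFDerivAt (GF n L j) (DG n L j q) q := by
  have hs := hasFDerivAt_sF n L q
  have hpj := (ContinuousLinearMap.proj (R := ℝ) (φ := fun _ : Fin (2*n+1) => ℝ)
    (iot n j)).hasFDerivAt (x := q)
  have hpp := (ContinuousLinearMap.proj (R := ℝ) (φ := fun _ : Fin (2*n+1) => ℝ)
    (iot n (prm n j))).hasFDerivAt (x := q)
  have hpt := (ContinuousLinearMap.proj (R := ℝ) (φ := fun _ : Fin (2*n+1) => ℝ)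
    (tauF n)).hasFDerivAt (x := q)
  have heq : GF n L j = fun y =>
      4 * cF n L j * (sF n L y * y (iot n j))
      + 32 * epsF n j * lam n L j * (y (iot n (prm n j)) * y (tauF n)) := by
    funext y; unfold GF elF; ring
  rw [heq]
  have h1 := (hs.mul hpj).const_mul (4 * cF n L j)
  have h2 := (hpp.mul hpt).const_mul (32 * epsF n j * lam n L j)
  refine HasFDerivAt.congr_fderiv (h1.add h2) ?_
  refine ContinuousLinearMap.ext fun v => ?_
  simp [DG, smul_eq_mul, elF]
  ring

def XG (i j : Fin (2*n)) (q : Fin (2*n+1) → ℝ) : ℝ :=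
  8 * cF n L i * cF n L j * q (iot n i) * q (iot n j)
  + 4 * cF n L j * sF n L q * (if j = i then 1 else 0)
  + 32 * epsF n j * lam n L j * q (tauF n) * (if prm n j = i then 1 else 0)
  + 32 * elF n L i q * elF n L j q

lemma DG_single (i j : Fin (2*n)) (q : Fin (2*n+1) → ℝ) :
    DG n L j q (Pi.single (iot n i) 1) + elF n L i q * DG n L j q (Pi.single (tauF n) 1)
      = XG n L i j q := by
  simp [DG, XG, DS_single, DS_tau, elF]
  ring

def FF (j : Fin (2*n)) (q : Fin (2*n+1) → ℝ) : ℝ :=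
  1/4 * (AF n L q) ^ (-(3:ℝ)/4) * GF n L j q

lemma X_rho_eq (j : Fin (2*n)) (q : Fin (2*n+1) → ℝ) (hq : 0 < AF n L q) :
    X n L j (rho n L) q = FF n L j q := by
  rw [X_eq]
  unfold pderiv'
  have hd : HasFDerivAt (rho n L) (((1/4 : ℝ) * AF n L q ^ ((1:ℝ)/4 - 1)) • DA n L q) q := by
    rw [rho_eq]
    exact (hasFDerivAt_AF n L q).rpow_const (Or.inl hq.ne')
  rw [hd.fderiv]
  have he : ((1:ℝ)/4 - 1) = -(3:ℝ)/4 := by norm_num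
  simp only [ContinuousLinearMap.coe_smul', Pi.smul_apply, smul_eq_mul, he,
    DA_single, DA_tau]
  unfold FF GF
  ring

lemma continuous_AF : Continuous (AF n L) := by
  unfold AF sF
  fun_prop

lemma X_X_rho (i j : Fin (2*n)) (q : Fin (2*n+1) → ℝ) (hq : 0 < AF n L q) :
    X n L i (X n L j (rho n L)) q
      = 1/4 * (AF n L q ^ (-(3:ℝ)/4) * XG n L i j q
          + GF n L j q * (-(3:ℝ)/4 * AF n L q ^ (-(7:ℝ)/4)) * GF n L i q) := by
  rw [X_eq]
  unfold pderiv'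
  have hfd : fderiv ℝ (X n L j (rho n L)) q = fderiv ℝ (FF n L j) q := by
    apply Filter.EventuallyEq.fderiv_eq
    have hcont : ContinuousAt (AF n L) q := (continuous_AF n L).continuousAt
    have hev : ∀ᶠ q' in nhds q, AF n L q' ∈ Set.Ioi (0:ℝ) := hcont (Ioi_mem_nhds hq)
    filter_upwards [hev] with q' hq' using X_rho_eq n L j q' hq'
  rw [hfd]
  have hG := hasFDerivAt_GF n L j q
  have hA := hasFDerivAt_AF n L q
  have hr : HasFDerivAt (fun q => AF n L q ^ (-(3:ℝ)/4))
      ((-(3:ℝ)/4 * AF n L q ^ (-(3:ℝ)/4 - 1)) • DA n L q) q :=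
    hA.rpow_const (Or.inl hq.ne')
  have hFF : HasFDerivAt (FF n L j)
      ((1/4 : ℝ) • ((AF n L q ^ (-(3:ℝ)/4)) • DG n L j q
        + GF n L j q • ((-(3:ℝ)/4 * AF n L q ^ (-(3:ℝ)/4 - 1)) • DA n L q))) q := by
    have heq : FF n L j = fun y => (1/4 : ℝ) * (AF n L y ^ (-(3:ℝ)/4) * GF n L j y) := by
      funext y; unfold FF; ring
    rw [heq]
    exact (hr.mul hG).const_mul (1/4 : ℝ)
  rw [hFF.fderiv]
  have he : (-(3:ℝ)/4 - 1) = -(7:ℝ)/4 := by norm_num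
  have hX := DG_single n L i j q
  simp only [ContinuousLinearMap.coe_smul', Pi.smul_apply, smul_eq_mul,
    ContinuousLinearMap.add_apply, he, DA_single, DA_tau]
  unfold GF
  linear_combination (1/4 * AF n L q ^ (-(3:ℝ)/4)) * hX

lemma hwc (hL : ∀ j, L j ≠ 0) (j : Fin (2*n)) : wgt n L j * cF n L j = 1 := by
  rw [wgt_eq]
  unfold cF
  have := abs_pos.mpr (lam_ne n L hL j)
  field_simp

lemma B2 (q : Fin (2*n+1) → ℝ) : ∑ j, q (iot n j) * elF n L j q = 0 := by
  rw [sum_split]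
  apply Finset.sum_eq_zero
  intro k _
  simp
  ring

lemma B3 (hL : ∀ j, L j ≠ 0) (q : Fin (2*n+1) → ℝ) :
    ∑ j, wgt n L j * (elF n L j q)^2 = 1/4 * sF n L q := by
  have step : ∀ k : Fin n,
      wgt n L (loF n k) * (elF n L (loF n k) q)^2 + wgt n L (hiF n k) * (elF n L (hiF n k) q)^2
      = 1/4 * (cF n L (loF n k) * (q (iot n (loF n k)))^2)
        + 1/4 * (cF n L (hiF n k) * (q (iot n (hiF n k)))^2) := by
    intro k
    have ha : |L k| ≠ 0 := abs_ne_zero.mpr (hL k)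
    have h2 : L k ^ 2 = |L k| ^ 2 := (sq_abs (L k)).symm
    simp only [wgt_lo, wgt_hi, elF_lo, elF_hi, cF_lo, cF_hi]
    field_simp
    linear_combination (4 * q (iot n (hiF n k))^2 + 4 * q (iot n (loF n k))^2) * h2
  rw [sum_split, Finset.sum_congr rfl (fun k _ => step k)]
  unfold sF
  rw [sum_split n (fun j => cF n L j * (q (iot n j))^2), Finset.mul_sum]
  apply Finset.sum_congr rfl
  intro k _
  ring

lemma sum_xG (q : Fin (2*n+1) → ℝ) :
    ∑ i, q (iot n i) * GF n L i q = 4 * (sF n L q)^2 := by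
  have step : ∀ i : Fin (2*n), q (iot n i) * GF n L i q
      = 4 * sF n L q * (cF n L i * (q (iot n i))^2)
        + 32 * q (tauF n) * (q (iot n i) * elF n L i q) := by
    intro i; unfold GF; ring
  rw [Finset.sum_congr rfl (fun i _ => step i), Finset.sum_add_distrib,
    ← Finset.mul_sum, ← Finset.mul_sum]
  have hs : ∑ i, cF n L i * (q (iot n i))^2 = sF n L q := rfl
  rw [hs, B2]
  ring

lemma sum_wG2 (hL : ∀ j, L j ≠ 0) (q : Fin (2*n+1) → ℝ) :
    ∑ i, wgt n L i * (GF n L i q)^2 = 16 * sF n L q * AF n L q := by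
  have step : ∀ i : Fin (2*n), wgt n L i * (GF n L i q)^2
      = 16 * (sF n L q)^2 * (cF n L i * (q (iot n i))^2)
        + 256 * sF n L q * q (tauF n) * (q (iot n i) * elF n L i q)
        + 1024 * (q (tauF n))^2 * (wgt n L i * (elF n L i q)^2) := by
    intro i
    unfold GF
    linear_combination (16 * (sF n L q)^2 * cF n L i * (q (iot n i))^2
      + 256 * sF n L q * q (tauF n) * q (iot n i) * elF n L i q) * (hwc n L hL i)
  rw [Finset.sum_congr rfl (fun i _ => step i), Finset.sum_add_distrib,
    Finset.sum_add_distrib, ← Finset.mul_sum, ← Finset.mul_sum, ← Finset.mul_sum]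
  have hs : ∑ i, cF n L i * (q (iot n i))^2 = sF n L q := rfl
  rw [hs, B2, B3 n L hL]
  unfold AF
  ring

lemma sum_wlG (hL : ∀ j, L j ≠ 0) (q : Fin (2*n+1) → ℝ) :
    ∑ i, wgt n L i * elF n L i q * GF n L i q = 8 * sF n L q * q (tauF n) := by
  have step : ∀ i : Fin (2*n), wgt n L i * elF n L i q * GF n L i q
      = 4 * sF n L q * (q (iot n i) * elF n L i q)
        + 32 * q (tauF n) * (wgt n L i * (elF n L i q)^2) := by
    intro i
    unfold GF
    linear_combination (4 * sF n L q * q (iot n i) * elF n L i q) * (hwc n L hL i)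
  rw [Finset.sum_congr rfl (fun i _ => step i), Finset.sum_add_distrib,
    ← Finset.mul_sum, ← Finset.mul_sum, B2, B3 n L hL]
  ring

lemma sum_eps (q : Fin (2*n+1) → ℝ) :
    ∑ j, 32 * q (tauF n) * epsF n j * lam n L j
        * (wgt n L (prm n j) * GF n L (prm n j) q * (wgt n L j * GF n L j q)) = 0 := by
  rw [sum_split]
  apply Finset.sum_eq_zero
  intro k _
  simp
  ring

lemma double_const (c : ℝ) (u : Fin (2*n) → Fin (2*n) → ℝ) :
    ∑ i, ∑ j, c * u i j = c * ∑ i, ∑ j, u i j := by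
  rw [Finset.mul_sum]
  exact Finset.sum_congr rfl fun i _ => (Finset.mul_sum _ _ _).symm

lemma double_prod (c : ℝ) (f : Fin (2*n) → ℝ) :
    ∑ i, ∑ j, c * (f i * f j) = c * ((∑ i, f i) * (∑ j, f j)) := by
  rw [Finset.sum_mul_sum, Finset.mul_sum]
  exact Finset.sum_congr rfl fun i _ => (Finset.mul_sum _ _ _).symm

lemma double_diag (g : Fin (2*n) → Fin (2*n) → ℝ) :
    ∑ i, ∑ j, (if j = i then g i j else 0) = ∑ i, g i i := by
  apply Finset.sum_congr rfl
  intro i _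
  rw [Finset.sum_ite_eq']
  simp

lemma double_prm (g h : Fin (2*n) → ℝ) :
    ∑ i, ∑ j, (if prm n j = i then h j * g i else 0) = ∑ j, h j * g (prm n j) := by
  rw [Finset.sum_comm]
  apply Finset.sum_congr rfl
  intro j _
  rw [Finset.sum_ite_eq]
  simp

lemma sum_eps' (q : Fin (2*n+1) → ℝ) :
    ∑ j, (32 * q (tauF n) * epsF n j * lam n L j * (wgt n L j * GF n L j q))
        * (wgt n L (prm n j) * GF n L (prm n j) q) = 0 := by
  rw [sum_split]
  apply Finset.sum_eq_zero
  intro k _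
  simp
  ring

lemma key2 (hL : ∀ j, L j ≠ 0) (q : Fin (2*n+1) → ℝ) :
    ∑ i, ∑ j, wgt n L i * wgt n L j * GF n L i q * GF n L j q * XG n L i j q
      = 192 * (sF n L q)^2 * AF n L q := by
  have expand : ∀ i j : Fin (2*n),
      wgt n L i * wgt n L j * GF n L i q * GF n L j q * XG n L i j q
      = 8 * ((wgt n L i * cF n L i * q (iot n i) * GF n L i q)
              * (wgt n L j * cF n L j * q (iot n j) * GF n L j q))
        + (if j = i then 4 * sF n L q
            * (wgt n L i * wgt n L j * cF n L j * GF n L i q * GF n L j q) else 0)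
        + (if prm n j = i then
            (32 * q (tauF n) * epsF n j * lam n L j * (wgt n L j * GF n L j q))
              * (wgt n L i * GF n L i q) else 0)
        + 32 * ((wgt n L i * elF n L i q * GF n L i q)
              * (wgt n L j * elF n L j q * GF n L j q)) := by
    intro i j
    unfold XG
    split_ifs <;> ring
  rw [Finset.sum_congr rfl fun i _ => Finset.sum_congr rfl fun j _ => expand i j]
  simp only [Finset.sum_add_distrib]
  rw [double_prod, double_prod, double_diag, double_prm]
  have hf1 : ∑ i, wgt n L i * cF n L i * q (iot n i) * GF n L i q = 4 * (sF n L q)^2 := by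
    have st : ∀ i : Fin (2*n), wgt n L i * cF n L i * q (iot n i) * GF n L i q
        = q (iot n i) * GF n L i q := fun i => by
      linear_combination (q (iot n i) * GF n L i q) * (hwc n L hL i)
    rw [Finset.sum_congr rfl fun i _ => st i, sum_xG]
  have hdiag : ∑ i, 4 * sF n L q
      * (wgt n L i * wgt n L i * cF n L i * GF n L i q * GF n L i q)
      = 64 * (sF n L q)^2 * AF n L q := by
    have st : ∀ i : Fin (2*n), 4 * sF n L q
        * (wgt n L i * wgt n L i * cF n L i * GF n L i q * GF n L i q)
        = (4 * sF n L q) * (wgt n L i * (GF n L i q)^2) := fun i => by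
      linear_combination (4 * sF n L q * wgt n L i * GF n L i q * GF n L i q) * (hwc n L hL i)
    rw [Finset.sum_congr rfl fun i _ => st i, ← Finset.mul_sum, sum_wG2 n L hL]
    ring
  rw [hf1, hdiag, sum_eps', sum_wlG n L hL]
  unfold AF
  ring

lemma AF_pos (hL : ∀ j, L j ≠ 0) (q : Fin (2*n+1) → ℝ) (hq : q ≠ 0) : 0 < AF n L q := by
  have h0 : 0 ≤ AF n L q := by unfold AF; positivity
  rcases h0.lt_or_eq with h | h
  · exact h
  · exfalso
    apply hq
    have hs2 : (sF n L q)^2 + 16*(q (tauF n))^2 = 0 := h.symm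
    have ht : q (tauF n) = 0 := by nlinarith [sq_nonneg (sF n L q), sq_nonneg (q (tauF n))]
    have hs : sF n L q = 0 := by nlinarith [sq_nonneg (sF n L q), sq_nonneg (q (tauF n))]
    have hx : ∀ j : Fin (2*n), q (iot n j) = 0 := by
      intro j
      have hnn : ∀ i ∈ Finset.univ, 0 ≤ cF n L i * (q (iot n i))^2 := fun i _ => by
        unfold cF; positivity
      have h1 := (Finset.sum_eq_zero_iff_of_nonneg hnn).mp hs j (Finset.mem_univ j)
      have hci : 0 < cF n L j := by
        have := abs_pos.mpr (lam_ne n L hL j)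
        unfold cF; positivity
      have hx2 : (q (iot n j))^2 = 0 := by nlinarith [sq_nonneg (q (iot n j))]
      exact pow_eq_zero_iff two_ne_zero |>.mp hx2
    funext m
    simp only [Pi.zero_apply]
    by_cases hm : (m:ℕ) < 2*n
    · have hmi : m = iot n ⟨(m:ℕ), hm⟩ := Fin.ext rfl
      rw [hmi]
      exact hx _
    · have hm2 : (m:ℕ) = 2*n := by have := m.isLt; omega
      have hmt : m = tauF n := Fin.ext hm2
      rw [hmt]
      exact ht

lemma rpow_combine (a : ℝ) (ha : 0 < a) :
    a * (a ^ (-(3:ℝ)/4))^3 = a^2 * ((a ^ (-(3:ℝ)/4))^2 * a ^ (-(7:ℝ)/4)) := by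
  have h3 : (a ^ (-(3:ℝ)/4))^(3:ℕ) = a ^ (-(9:ℝ)/4) := by
    rw [← Real.rpow_natCast (a ^ (-(3:ℝ)/4)) 3, ← Real.rpow_mul ha.le]; norm_num
  have h2 : (a ^ (-(3:ℝ)/4))^(2:ℕ) = a ^ (-(3:ℝ)/2) := by
    rw [← Real.rpow_natCast (a ^ (-(3:ℝ)/4)) 2, ← Real.rpow_mul ha.le]; norm_num
  rw [h3, h2, ← Real.rpow_natCast a 2, ← Real.rpow_add ha, ← Real.rpow_add ha,
    mul_comm a, ← Real.rpow_add_one ha.ne']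
  norm_num

end RhoAux

theorem rho_weighted_infinite_harmonic
    (n : ℕ) (hn : 1 ≤ n) (L : Fin n → ℝ) (hL : ∀ j, L j ≠ 0) :
    ∀ q : Fin (2*n+1) → ℝ, q ≠ 0 →
      ∑ i : Fin (2*n), ∑ j : Fin (2*n),
        wgt n L i * wgt n L j * X n L i (X n L j (rho n L)) q *
          X n L i (rho n L) q * X n L j (rho n L) q = 0 := by
  intro q hq
  have hA : 0 < AF n L q := AF_pos n L hL q hq
  have expand : ∀ i j : Fin (2*n),
      wgt n L i * wgt n L j * X n L i (X n L j (rho n L)) q *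
          X n L i (rho n L) q * X n L j (rho n L) q
      = (1/64 * (AF n L q ^ (-(3:ℝ)/4))^3)
          * (wgt n L i * wgt n L j * GF n L i q * GF n L j q * XG n L i j q)
        + (-(3:ℝ)/256 * ((AF n L q ^ (-(3:ℝ)/4))^2 * AF n L q ^ (-(7:ℝ)/4)))
          * ((wgt n L i * (GF n L i q)^2) * (wgt n L j * (GF n L j q)^2)) := by
    intro i j
    rw [X_X_rho n L i j q hA, X_rho_eq n L i q hA, X_rho_eq n L j q hA]
    unfold FF
    ring
  rw [Finset.sum_congr rfl fun i _ => Finset.sum_congr rfl fun j _ => expand i j]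
  simp only [Finset.sum_add_distrib]
  rw [double_const, double_prod, key2 n L hL q, sum_wG2 n L hL]
  have hcomb := rpow_combine (AF n L q) hA
  linear_combination (3 * (sF n L q)^2) * hcomb
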